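/- arXiv:1608.05856 — 2 statements merged into one kernel-verified Lean document; each statement's English description precedes it below -/
import Mathlib

section
/- Fix X, L ∈ ℝ^{m×n}, λ₂ > 0, 0 < q < 1, ε > 0, and μ₂ > 1. Define G(S) = λ₂·Σ_{ij}(|S_{ij}| + ε)^q + (1/2)·‖L + S − X‖_F² for S ∈ ℝ^{m×n}. Given S^k ∈ ℝ^{m×n}, set M^k_{ij} = q/(|S^k_{ij}| + ε)^{1−q} and define S^{k+1} entrywise by S^{k+1}_{ij} = S_{λ₂M^k_{ij}/μ₂}( S^k_{ij} − (1/μ₂)·(L + S^k − X)_{ij} ), where S_τ(y) = sign(y)·max(|y| − τ, 0). Then G(S^{k+1}) ≤ G(S^k) − ((μ₂ − 1)/2)·‖S^{k+1} − S^k‖_F². -/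
/-- Squared Frobenius norm of a real matrix. -/
noncomputable def frobNormSq {m n : ℕ} (A : Matrix (Fin m) (Fin n) ℝ) : ℝ :=
  ∑ i, ∑ j, (A i j) ^ 2

/-- The scalar soft-thresholding operator `S_τ(y) = sign(y)·max(|y| − τ, 0)`. -/
noncomputable def softThresh (τ y : ℝ) : ℝ :=
  Real.sign y * max (|y| - τ) 0

lemma concave_tangent {q u v : ℝ} (hq0 : 0 < q) (hq1 : q < 1) (hu : 0 ≤ u) (hv : 0 < v) :
    u ^ q ≤ v ^ q + q * v ^ (q - 1) * (u - v) := by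
  have hs : (-1 : ℝ) ≤ u / v - 1 := by
    have : 0 ≤ u / v := div_nonneg hu hv.le
    linarith
  have hb := rpow_one_add_le_one_add_mul_self hs hq0.le hq1.le
  have h1 : (1 : ℝ) + (u / v - 1) = u / v := by ring
  rw [h1] at hb
  have hdiv : (u / v) ^ q = u ^ q / v ^ q := Real.div_rpow hu hv.le q
  have hvq : (0 : ℝ) < v ^ q := Real.rpow_pos_of_pos hv q
  have hsub : v ^ (q - 1) = v ^ q / v := by
    rw [Real.rpow_sub hv, Real.rpow_one]
  rw [hdiv] at hb
  have h2 := mul_le_mul_of_nonneg_right hb hvq.le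
  rw [div_mul_cancel₀ _ (ne_of_gt hvq)] at h2
  rw [hsub]
  calc u ^ q ≤ (1 + q * (u / v - 1)) * v ^ q := h2
    _ = v ^ q + q * (v ^ q / v) * (u - v) := by field_simp

lemma prox_ineq (τ y z : ℝ) (hτ : 0 ≤ τ) :
    τ * |softThresh τ y| + (softThresh τ y - y)^2 / 2 ≤ τ * |z| + (z - y)^2 / 2 := by
  unfold softThresh
  rcases lt_trichotomy y 0 with hy | hy | hy
  · rw [Real.sign_of_neg hy, abs_of_neg hy]
    rcases le_or_gt (-y) τ with h | h
    · rw [max_eq_right (by linarith)]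
      simp only [mul_zero, abs_zero]
      have h1 : -y * -|z| ≤ -y * z := mul_le_mul_of_nonneg_left (neg_abs_le z) (by linarith)
      have h2 : 0 ≤ (τ + y) * |z| := mul_nonneg (by linarith) (abs_nonneg z)
      nlinarith [sq_nonneg z]
    · rw [max_eq_left (by linarith)]
      have ht : (-1 : ℝ) * (-y - τ) = y + τ := by ring
      rw [ht, abs_of_neg (by linarith : y + τ < 0)]
      have h1 : τ * -|z| ≤ τ * z := mul_le_mul_of_nonneg_left (neg_abs_le z) hτ
      nlinarith [sq_nonneg (z - (y + τ))]
  · subst hy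
    simp only [Real.sign_zero, zero_mul, abs_zero, mul_zero]
    nlinarith [abs_nonneg z, mul_nonneg hτ (abs_nonneg z), sq_nonneg z]
  · rw [Real.sign_of_pos hy, abs_of_pos hy, one_mul]
    rcases le_or_gt y τ with h | h
    · rw [max_eq_right (by linarith)]
      simp only [abs_zero, mul_zero]
      have h1 : y * z ≤ y * |z| := mul_le_mul_of_nonneg_left (le_abs_self z) hy.le
      have h2 : 0 ≤ (τ - y) * |z| := mul_nonneg (by linarith) (abs_nonneg z)
      nlinarith [sq_nonneg z]
    · rw [max_eq_left (by linarith), abs_of_nonneg (by linarith : (0:ℝ) ≤ y - τ)]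
      have h1 : τ * z ≤ τ * |z| := mul_le_mul_of_nonneg_left (le_abs_self z) hτ
      nlinarith [sq_nonneg (z - (y - τ))]

set_option maxHeartbeats 800000 in
/-- One proximal iteratively reweighted step on the sparse part decreases the smoothed
objective `G(S) = λ₂·Σᵢⱼ(|Sᵢⱼ| + ε)^q + (1/2)·‖L + S − X‖_F²` by at least
`((μ₂ − 1)/2)·‖S^{k+1} − S^k‖_F²`. -/
theorem sparse_step_sufficient_decrease {m n : ℕ}
    (X L : Matrix (Fin m) (Fin n) ℝ) (lam2 q ε μ2 : ℝ)
    (hlam2 : 0 < lam2) (hq0 : 0 < q) (hq1 : q < 1) (hε : 0 < ε) (hμ2 : 1 < μ2)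
    (G : Matrix (Fin m) (Fin n) ℝ → ℝ)
    (hG : ∀ S, G S = lam2 * (∑ i, ∑ j, (|S i j| + ε) ^ q)
      + (1 / 2) * frobNormSq (L + S - X))
    (Sk : Matrix (Fin m) (Fin n) ℝ)
    (Mk : Matrix (Fin m) (Fin n) ℝ)
    (hMk : ∀ i j, Mk i j = q / (|Sk i j| + ε) ^ (1 - q))
    (Sk1 : Matrix (Fin m) (Fin n) ℝ)
    (hSk1 : ∀ i j, Sk1 i j =
      softThresh (lam2 * Mk i j / μ2) (Sk i j - (1 / μ2) * (L + Sk - X) i j)) :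
    G Sk1 ≤ G Sk - ((μ2 - 1) / 2) * frobNormSq (Sk1 - Sk) := by
  have hμ0 : (0 : ℝ) < μ2 := lt_trans one_pos hμ2
  have key : ∀ i j,
      lam2 * (|Sk1 i j| + ε) ^ q + (1 / 2) * ((L + Sk1 - X) i j) ^ 2
        + ((μ2 - 1) / 2) * ((Sk1 - Sk) i j) ^ 2
      ≤ lam2 * (|Sk i j| + ε) ^ q + (1 / 2) * ((L + Sk - X) i j) ^ 2 := by
    intro i j
    set s := Sk i j with hs
    set s1 := Sk1 i j with hs1
    set g := (L + Sk - X) i j with hg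
    have hv : (0 : ℝ) < |s| + ε := by positivity
    have hu : (0 : ℝ) ≤ |s1| + ε := by positivity
    -- weight identity
    have hw : Mk i j = q * (|s| + ε) ^ (q - 1) := by
      rw [hMk i j]
      rw [show q - 1 = -(1 - q) by ring, Real.rpow_neg hv.le]
      rw [div_eq_mul_inv]
    have hwpos : 0 ≤ Mk i j := by
      rw [hw]
      positivity
    -- concavity tangent bound
    have hA : (|s1| + ε) ^ q ≤ (|s| + ε) ^ q + Mk i j * (|s1| - |s|) := by
      have := concave_tangent hq0 hq1 hu hv
      calc (|s1| + ε) ^ q ≤ (|s| + ε) ^ q + q * (|s| + ε) ^ (q - 1) * ((|s1| + ε) - (|s| + ε)) := this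
        _ = (|s| + ε) ^ q + Mk i j * (|s1| - |s|) := by rw [hw]; ring
    -- prox inequality
    have hτ : 0 ≤ lam2 * Mk i j / μ2 := by positivity
    have hprox := prox_ineq (lam2 * Mk i j / μ2) (s - 1 / μ2 * g) s hτ
    rw [← hSk1 i j] at hprox
    have h2 := mul_le_mul_of_nonneg_left hprox (le_of_lt (mul_pos hμ0 hμ0))
    have e1 : μ2 * μ2 * (lam2 * Mk i j / μ2 * |s1| + (s1 - (s - 1 / μ2 * g)) ^ 2 / 2)
        = μ2 * (lam2 * Mk i j * |s1|) + (μ2 * (s1 - s) + g) ^ 2 / 2 := by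
      field_simp
      ring
    have e2 : μ2 * μ2 * (lam2 * Mk i j / μ2 * |s| + (s - (s - 1 / μ2 * g)) ^ 2 / 2)
        = μ2 * (lam2 * Mk i j * |s|) + g ^ 2 / 2 := by
      field_simp
      ring
    rw [e1, e2] at h2
    have hexp : (μ2 * (s1 - s) + g) ^ 2 / 2
        = μ2 * ((μ2 / 2) * (s1 - s) ^ 2) + μ2 * (g * (s1 - s)) + g ^ 2 / 2 := by ring
    rw [hexp] at h2
    have h4 : μ2 * (lam2 * Mk i j * |s1| + g * (s1 - s) + (μ2 / 2) * (s1 - s) ^ 2)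
        ≤ μ2 * (lam2 * Mk i j * |s|) := by
      have hd : μ2 * (lam2 * Mk i j * |s1| + g * (s1 - s) + (μ2 / 2) * (s1 - s) ^ 2)
          = μ2 * (lam2 * Mk i j * |s1|) + μ2 * (g * (s1 - s))
            + μ2 * ((μ2 / 2) * (s1 - s) ^ 2) := by ring
      rw [hd]
      linarith
    have hB : lam2 * Mk i j * |s1| + g * (s1 - s) + (μ2 / 2) * (s1 - s) ^ 2
        ≤ lam2 * Mk i j * |s| := le_of_mul_le_mul_left h4 hμ0
    have hA' : lam2 * (|s1| + ε) ^ q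
        ≤ lam2 * (|s| + ε) ^ q + lam2 * Mk i j * |s1| - lam2 * Mk i j * |s| :=
      le_trans (mul_le_mul_of_nonneg_left hA hlam2.le) (le_of_eq (by ring))
    have hL1 : (L + Sk1 - X) i j = g + (s1 - s) := by
      simp only [Matrix.add_apply, Matrix.sub_apply, hg]
      ring
    have hD : (Sk1 - Sk) i j = s1 - s := by
      simp only [Matrix.sub_apply]
      rfl
    rw [hL1, hD]
    have hsq : (1 / 2 : ℝ) * (g + (s1 - s)) ^ 2
        = (1 / 2) * g ^ 2 + g * (s1 - s) + (1 / 2) * (s1 - s) ^ 2 := by ring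
    have hsq2 : ((μ2 - 1) / 2 : ℝ) * (s1 - s) ^ 2
        = (μ2 / 2) * (s1 - s) ^ 2 - (1 / 2) * (s1 - s) ^ 2 := by ring
    linarith
  have hsum : ∑ i, ∑ j,
      (lam2 * (|Sk1 i j| + ε) ^ q + (1 / 2) * ((L + Sk1 - X) i j) ^ 2
        + ((μ2 - 1) / 2) * ((Sk1 - Sk) i j) ^ 2)
      ≤ ∑ i, ∑ j, (lam2 * (|Sk i j| + ε) ^ q + (1 / 2) * ((L + Sk - X) i j) ^ 2) :=
    Finset.sum_le_sum fun i _ => Finset.sum_le_sum fun j _ => key i j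
  simp only [Finset.sum_add_distrib, ← Finset.mul_sum] at hsum
  rw [hG, hG]
  unfold frobNormSq
  linarith
end

section
/- Under the hypotheses of the previous result (g : [0,∞) → [0,∞) continuous, concave, increasing; f differentiable with L(f)-Lipschitz gradient and f ≥ 0; F(X) = Σ_{i=1}^m g(σ_i(X)) + f(X); μ > L(f); L^{k+1} a global minimizer of the linearized proximal surrogate Σ_i w_i^k·σ_i(X) + ⟨∇f(L^k), X − L^k⟩ + (μ/2)·‖X − L^k‖_F² with w_i^k a supergradient of g at σ_i(L^k)), the squared successive differences are summable with the explicit bound Σ_{k=1}^∞ ‖L^k − L^{k+1}‖_F² ≤ 2·F(L^1)/(μ − L(f)). -/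
attribute [local instance] Matrix.frobeniusSeminormedAddCommGroup
  Matrix.frobeniusNormedAddCommGroup Matrix.frobeniusNormedSpace

/-- Frobenius norm of a real matrix. -/
noncomputable def frobNorm {m n : ℕ} (A : Matrix (Fin m) (Fin n) ℝ) : ℝ :=
  Real.sqrt (frobNormSq A)

/-- The Frobenius inner product `⟨A, B⟩ = Σᵢⱼ Aᵢⱼ·Bᵢⱼ`. -/
noncomputable def frobInner {m n : ℕ} (A B : Matrix (Fin m) (Fin n) ℝ) : ℝ :=
  ∑ i, ∑ j, A i j * B i j

/-- The Frobenius inner product with a fixed matrix `G`, as a continuous linear map. -/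
noncomputable def frobInnerCLM {m n : ℕ} (G : Matrix (Fin m) (Fin n) ℝ) :
    Matrix (Fin m) (Fin n) ℝ →L[ℝ] ℝ :=
  LinearMap.toContinuousLinearMap
    { toFun := fun H => frobInner G H
      map_add' := by
        intro A B
        simp [frobInner, Matrix.add_apply, mul_add, Finset.sum_add_distrib]
      map_smul' := by
        intro c A
        simp [frobInner, Matrix.smul_apply, Finset.mul_sum, mul_comm, mul_left_comm,
          smul_eq_mul] }

/-- The singular values of a real `m × n` matrix `A`, arranged in nonincreasing order:
the square roots of the eigenvalues of `A * Aᵀ`, sorted in nonincreasing order. -/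
noncomputable def singularValues {m n : ℕ} (A : Matrix (Fin m) (Fin n) ℝ) :
    Fin (min m n) → ℝ := fun i =>
  Real.sqrt
    ((Matrix.isHermitian_mul_conjTranspose_self A).eigenvalues
      (Tuple.sort (fun j => -(Matrix.isHermitian_mul_conjTranspose_self A).eigenvalues j)
        (Fin.castLE (min_le_left m n) i)))

section Helpers

variable {m n : ℕ}

lemma frobNormSq_nonneg (A : Matrix (Fin m) (Fin n) ℝ) : 0 ≤ frobNormSq A :=
  Finset.sum_nonneg fun _ _ => Finset.sum_nonneg fun _ _ => sq_nonneg _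

lemma frobNorm_eq_norm (A : Matrix (Fin m) (Fin n) ℝ) : frobNorm A = ‖A‖ := by
  rw [Matrix.frobenius_norm_def, ← Real.sqrt_eq_rpow]
  unfold frobNorm frobNormSq
  congr 1
  refine Finset.sum_congr rfl fun i _ => Finset.sum_congr rfl fun j _ => ?_
  rw [show ((2:ℝ) = ((2:ℕ):ℝ)) by norm_num, Real.rpow_natCast, Real.norm_eq_abs, sq_abs]

lemma frobNormSq_eq_sq_norm (A : Matrix (Fin m) (Fin n) ℝ) : frobNormSq A = ‖A‖ ^ 2 := by
  rw [← frobNorm_eq_norm]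
  unfold frobNorm
  rw [Real.sq_sqrt (frobNormSq_nonneg A)]

lemma frobInner_le_norm (A B : Matrix (Fin m) (Fin n) ℝ) : frobInner A B ≤ ‖A‖ * ‖B‖ := by
  have cs := Finset.sum_mul_sq_le_sq_mul_sq Finset.univ
    (fun p : Fin m × Fin n => A p.1 p.2) (fun p : Fin m × Fin n => B p.1 p.2)
  have h1 : (∑ p : Fin m × Fin n, A p.1 p.2 * B p.1 p.2) = frobInner A B := by
    rw [frobInner, ← Finset.univ_product_univ, Finset.sum_product]
  have h2 : (∑ p : Fin m × Fin n, (A p.1 p.2) ^ 2) = frobNormSq A := by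
    rw [frobNormSq, ← Finset.univ_product_univ, Finset.sum_product]
  have h3 : (∑ p : Fin m × Fin n, (B p.1 p.2) ^ 2) = frobNormSq B := by
    rw [frobNormSq, ← Finset.univ_product_univ, Finset.sum_product]
  rw [h1, h2, h3] at cs
  calc frobInner A B ≤ |frobInner A B| := le_abs_self _
    _ = Real.sqrt ((frobInner A B) ^ 2) := (Real.sqrt_sq_eq_abs _).symm
    _ ≤ Real.sqrt (frobNormSq A * frobNormSq B) := Real.sqrt_le_sqrt cs
    _ = ‖A‖ * ‖B‖ := by
        rw [frobNormSq_eq_sq_norm, frobNormSq_eq_sq_norm, ← mul_pow,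
          Real.sqrt_sq (by positivity)]

lemma frobNormSq_sub_comm (A B : Matrix (Fin m) (Fin n) ℝ) :
    frobNormSq (A - B) = frobNormSq (B - A) := by
  unfold frobNormSq
  refine Finset.sum_congr rfl fun i _ => Finset.sum_congr rfl fun j _ => ?_
  rw [Matrix.sub_apply, Matrix.sub_apply]
  ring

lemma frobInner_sub_left (A B C : Matrix (Fin m) (Fin n) ℝ) :
    frobInner (A - B) C = frobInner A C - frobInner B C := by
  simp [frobInner, Matrix.sub_apply, sub_mul, Finset.sum_sub_distrib]

lemma abs_frobInner_le_norm (A B : Matrix (Fin m) (Fin n) ℝ) :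
    |frobInner A B| ≤ ‖A‖ * ‖B‖ := by
  rcases abs_cases (frobInner A B) with ⟨h, _⟩ | ⟨h, _⟩
  · rw [h]; exact frobInner_le_norm A B
  · rw [h]
    have := frobInner_le_norm (-A) B
    rw [show frobInner (-A) B = -frobInner A B by
        simp [frobInner, Matrix.neg_apply, Finset.sum_neg_distrib], norm_neg] at this
    linarith

lemma frobInnerCLM_apply (G H : Matrix (Fin m) (Fin n) ℝ) :
    frobInnerCLM G H = frobInner G H := rfl

lemma descent_lemma (f : Matrix (Fin m) (Fin n) ℝ → ℝ)
    (gradf : Matrix (Fin m) (Fin n) ℝ → Matrix (Fin m) (Fin n) ℝ) (Lf : ℝ)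
    (hdiff : ∀ X, HasFDerivAt f (frobInnerCLM (gradf X)) X)
    (hLip : ∀ X Y, frobNorm (gradf X - gradf Y) ≤ Lf * frobNorm (X - Y))
    (X Y : Matrix (Fin m) (Fin n) ℝ) :
    f Y ≤ f X + frobInner (gradf X) (Y - X) + Lf / 2 * frobNormSq (Y - X) := by
  set d := Y - X with hd
  set ψ : ℝ → ℝ := fun t => frobInner (gradf (X + t • d)) d with hψ
  have hLip' : ∀ P Q : Matrix (Fin m) (Fin n) ℝ, ‖gradf P - gradf Q‖ ≤ |Lf| * ‖P - Q‖ := by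
    intro P Q
    have := hLip P Q
    rw [frobNorm_eq_norm, frobNorm_eq_norm] at this
    calc ‖gradf P - gradf Q‖ ≤ Lf * ‖P - Q‖ := this
      _ ≤ |Lf| * ‖P - Q‖ := mul_le_mul_of_nonneg_right (le_abs_self _) (norm_nonneg _)
  have hline : ∀ t : ℝ, HasDerivAt (fun s : ℝ => X + s • d) d t := by
    intro t
    have h := ((hasDerivAt_id t).smul_const d).const_add X
    rw [one_smul] at h
    exact h
  have hφ : ∀ t : ℝ, HasDerivAt (fun s : ℝ => f (X + s • d)) (ψ t) t := by
    intro t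
    exact (hdiff (X + t • d)).comp_hasDerivAt t (hline t)
  have hψlip : LipschitzWith (Real.toNNReal (|Lf| * ‖d‖ ^ 2)) ψ := by
    apply LipschitzWith.of_dist_le_mul
    intro s t
    rw [Real.dist_eq, Real.dist_eq, Real.coe_toNNReal _ (by positivity)]
    have h1 : ψ s - ψ t = frobInner (gradf (X + s • d) - gradf (X + t • d)) d := by
      rw [frobInner_sub_left]
    rw [h1]
    calc |frobInner (gradf (X + s • d) - gradf (X + t • d)) d|
        ≤ ‖gradf (X + s • d) - gradf (X + t • d)‖ * ‖d‖ := abs_frobInner_le_norm _ _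
      _ ≤ (|Lf| * ‖(X + s • d) - (X + t • d)‖) * ‖d‖ :=
          mul_le_mul_of_nonneg_right (hLip' _ _) (norm_nonneg _)
      _ = |Lf| * ‖d‖ ^ 2 * |s - t| := by
          rw [show (X + s • d) - (X + t • d) = (s - t) • d by module, norm_smul,
            Real.norm_eq_abs]
          ring
  have hψcont : Continuous ψ := hψlip.continuous
  have hFTC : ∫ t in (0:ℝ)..1, ψ t = f Y - f X := by
    have := intervalIntegral.integral_eq_sub_of_hasDerivAt
      (f := fun s : ℝ => f (X + s • d)) (f' := ψ)
      (fun t _ => hφ t) (hψcont.intervalIntegrable 0 1)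
    simpa [hd] using this
  set c : ℝ := frobInner (gradf X) d with hc
  set a : ℝ := Lf * ‖d‖ ^ 2 with ha
  have hpt : ∀ t ∈ Set.Icc (0:ℝ) 1, ψ t ≤ c + a * t := by
    intro t ht
    have h1 : ψ t - c = frobInner (gradf (X + t • d) - gradf X) d := by
      rw [frobInner_sub_left]
    have h2 : ‖gradf (X + t • d) - gradf X‖ ≤ Lf * (t * ‖d‖) := by
      have := hLip (X + t • d) X
      rwa [show X + t • d - X = t • d by module, frobNorm_eq_norm, frobNorm_eq_norm,
        norm_smul, Real.norm_eq_abs, abs_of_nonneg ht.1] at this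
    have h3 : frobInner (gradf (X + t • d) - gradf X) d ≤ Lf * (t * ‖d‖) * ‖d‖ :=
      le_trans (frobInner_le_norm _ _) (mul_le_mul_of_nonneg_right h2 (norm_nonneg _))
    have : ψ t - c ≤ a * t := by rw [h1]; calc
      frobInner (gradf (X + t • d) - gradf X) d ≤ Lf * (t * ‖d‖) * ‖d‖ := h3
      _ = a * t := by rw [ha]; ring
    linarith
  have hint2 : IntervalIntegrable (fun t : ℝ => c + a * t) MeasureTheory.volume 0 1 :=
    ((by continuity : Continuous fun t : ℝ => c + a * t).intervalIntegrable 0 1)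
  have hmono := intervalIntegral.integral_mono_on (by norm_num : (0:ℝ) ≤ 1)
    (hψcont.intervalIntegrable 0 1) hint2 hpt
  have hval : ∫ t in (0:ℝ)..1, (c + a * t) = c + a / 2 := by
    rw [intervalIntegral.integral_add (continuous_const.intervalIntegrable 0 1)
      ((by continuity : Continuous fun t : ℝ => a * t).intervalIntegrable 0 1)]
    rw [intervalIntegral.integral_const_mul, integral_id, intervalIntegral.integral_const,
      smul_eq_mul]
    ring
  rw [hFTC, hval] at hmono
  have : frobNormSq d = ‖d‖ ^ 2 := frobNormSq_eq_sq_norm d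
  rw [hd] at this ⊢
  rw [this]
  have : a = Lf * ‖Y - X‖^2 := by rw [ha, hd]
  nlinarith [hmono]

end Helpers

/-- Summability of squared successive differences for the proximal iteratively reweighted
scheme: under the descent-lemma hypotheses with `f ≥ 0` and `g ≥ 0` on `[0,∞)`,
`Σ_{k=1}^∞ ‖L^k − L^{k+1}‖_F² ≤ 2·F(L¹)/(μ − L(f))`. -/
theorem pira_successive_differences_summable {m n : ℕ} (hmn : m ≤ n)
    (g : ℝ → ℝ)
    (hg_nonneg : ∀ t, 0 ≤ t → 0 ≤ g t)
    (hg_cont : ContinuousOn g (Set.Ici 0))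
    (hg_concave : ConcaveOn ℝ (Set.Ici 0) g)
    (hg_mono : MonotoneOn g (Set.Ici 0))
    (f : Matrix (Fin m) (Fin n) ℝ → ℝ)
    (gradf : Matrix (Fin m) (Fin n) ℝ → Matrix (Fin m) (Fin n) ℝ)
    (Lf : ℝ)
    (hdiff : ∀ X, HasFDerivAt f (frobInnerCLM (gradf X)) X)
    (hLip : ∀ X Y, frobNorm (gradf X - gradf Y) ≤ Lf * frobNorm (X - Y))
    (hf_nonneg : ∀ X, 0 ≤ f X)
    (F : Matrix (Fin m) (Fin n) ℝ → ℝ)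
    (hF : ∀ X, F X = (∑ i, g (singularValues X i)) + f X)
    (μ : ℝ) (hμ : Lf < μ)
    (L : ℕ → Matrix (Fin m) (Fin n) ℝ)
    (hstep : ∀ k : ℕ, ∃ w : Fin (min m n) → ℝ,
      (∀ i, 0 ≤ w i) ∧
      (∀ i, ∀ t : ℝ, 0 ≤ t →
        g t ≤ g (singularValues (L k) i) + w i * (t - singularValues (L k) i)) ∧
      (∀ X : Matrix (Fin m) (Fin n) ℝ,
        (∑ i, w i * singularValues (L (k + 1)) i)
            + frobInner (gradf (L k)) (L (k + 1) - L k)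
            + (μ / 2) * frobNormSq (L (k + 1) - L k)
          ≤ (∑ i, w i * singularValues X i)
            + frobInner (gradf (L k)) (X - L k)
            + (μ / 2) * frobNormSq (X - L k))) :
    Summable (fun k : ℕ => frobNormSq (L (k + 1) - L (k + 2))) ∧
    (∑' k : ℕ, frobNormSq (L (k + 1) - L (k + 2))) ≤ 2 * F (L 1) / (μ - Lf) := by
  have hpos : 0 < μ - Lf := sub_pos.mpr hμ
  have hσ : ∀ (X : Matrix (Fin m) (Fin n) ℝ) i, 0 ≤ singularValues X i :=
    fun X i => Real.sqrt_nonneg _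
  have hF0 : ∀ X, 0 ≤ F X := by
    intro X
    rw [hF]
    have : 0 ≤ ∑ i, g (singularValues X i) :=
      Finset.sum_nonneg fun i _ => hg_nonneg _ (hσ X i)
    linarith [hf_nonneg X]
  have key : ∀ k : ℕ, (μ - Lf) / 2 * frobNormSq (L (k+1) - L k) ≤ F (L k) - F (L (k+1)) := by
    intro k
    obtain ⟨w, hw0, hwsup, hmin⟩ := hstep k
    have hmin' := hmin (L k)
    rw [sub_self] at hmin'
    have hfro0 : frobInner (gradf (L k)) (0 : Matrix (Fin m) (Fin n) ℝ) = 0 := by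
      simp [frobInner]
    have hnsq0 : frobNormSq (0 : Matrix (Fin m) (Fin n) ℝ) = 0 := by
      simp [frobNormSq]
    rw [hfro0, hnsq0] at hmin'
    have hsup : ∑ i, g (singularValues (L (k+1)) i) ≤
        ∑ i, g (singularValues (L k) i)
        + (∑ i, w i * singularValues (L (k+1)) i - ∑ i, w i * singularValues (L k) i) := by
      have h1 : ∀ i ∈ Finset.univ, g (singularValues (L (k+1)) i) ≤
          g (singularValues (L k) i)
            + w i * (singularValues (L (k+1)) i - singularValues (L k) i) :=
        fun i _ => hwsup i _ (hσ _ i)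
      calc ∑ i, g (singularValues (L (k+1)) i)
          ≤ ∑ i, (g (singularValues (L k) i)
            + w i * (singularValues (L (k+1)) i - singularValues (L k) i)) :=
            Finset.sum_le_sum h1
        _ = _ := by
            rw [Finset.sum_add_distrib]
            congr 1
            simp [mul_sub, Finset.sum_sub_distrib]
    have hdesc := descent_lemma f gradf Lf hdiff hLip (L k) (L (k+1))
    rw [hF (L k), hF (L (k+1))]
    have hQid : (μ - Lf) / 2 * frobNormSq (L (k+1) - L k)
        = μ / 2 * frobNormSq (L (k+1) - L k) - Lf / 2 * frobNormSq (L (k+1) - L k) := by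
      ring
    nlinarith [hmin', hsup, hdesc, hQid]
  have key2 : ∀ k : ℕ, (μ - Lf) / 2 * frobNormSq (L (k+1) - L (k+2))
      ≤ F (L (k+1)) - F (L (k+2)) := by
    intro k
    have h := key (k+1)
    rwa [frobNormSq_sub_comm] at h
  have hnn : ∀ k : ℕ, 0 ≤ frobNormSq (L (k+1) - L (k+2)) := fun k => frobNormSq_nonneg _
  have hbound : ∀ N : ℕ, ∑ k ∈ Finset.range N, frobNormSq (L (k+1) - L (k+2))
      ≤ 2 * F (L 1) / (μ - Lf) := by
    intro N
    have htel : ∑ k ∈ Finset.range N, (F (L (k+1)) - F (L (k+2)))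
        = F (L 1) - F (L (N+1)) := by
      have := Finset.sum_range_sub' (fun i => F (L (i+1))) N
      simpa using this
    have h1 : (μ - Lf) / 2 * ∑ k ∈ Finset.range N, frobNormSq (L (k+1) - L (k+2))
        ≤ F (L 1) - F (L (N+1)) := by
      rw [Finset.mul_sum, ← htel]
      exact Finset.sum_le_sum fun k _ => key2 k
    have h2 := hF0 (L (N+1))
    rw [le_div_iff₀ hpos]
    nlinarith [h1]
  exact ⟨summable_of_sum_range_le hnn hbound, Real.tsum_le_of_sum_range_le hnn hbound⟩
end
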